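/- Let R be a commutative ring and K a field equipped with an R-algebra structure such that the structure map R → K is injective. Let A be a commutative R-algebra that is free of finite rank r as an R-module, and let J be an ideal of A. If there exist r pairwise distinct R-algebra homomorphisms from A to K all of which vanish on J, then J = 0. -/

import Mathlib

/-- Let `R` be a commutative ring and `K` a field equipped with an `R`-algebra structure such
that the structure map `R → K` is injective. Let `A` be a commutative `R`-algebra that is free
of finite rank `r` as an `R`-module, and let `J` be an ideal of `A`. If there exist `r`
pairwise distinct `R`-algebra homomorphisms from `A` to `K` all of which vanish on `J`,
then `J = 0`. -/
theorem stmt12 (R : Type*) [CommRing R] (K : Type*) [Field K] [Algebra R K]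
    (hinj : Function.Injective (algebraMap R K))
    (A : Type*) [CommRing A] [Algebra R A]
    (r : ℕ) (bA : Module.Basis (Fin r) R A)
    (J : Ideal A)
    (f : Fin r → (A →ₐ[R] K)) (hf : Function.Injective f)
    (hvanish : ∀ i : Fin r, ∀ x ∈ J, f i x = 0) :
    J = ⊥ := by
  -- the homs expand over the basis
  have hexp : ∀ (j : Fin r) (a : A),
      f j a = ∑ i, algebraMap R K (bA.repr a i) * f j (bA i) := by
    intro j a
    conv_lhs => rw [← bA.sum_repr a]
    rw [map_sum]
    refine Finset.sum_congr rfl fun i _ => ?_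
    rw [map_smul, Algebra.smul_def]
  -- the homs, as functions, are linearly independent over K (Dedekind)
  have hindep : LinearIndependent K (fun j : Fin r => ((f j : A → K))) := by
    refine (linearIndependent_monoidHom A K).comp
      (fun j => ((f j : A →* K))) (fun i j h => hf ?_)
    ext a
    exact DFunLike.congr_fun h a
  -- the matrix of values on basis elements
  set M : Matrix (Fin r) (Fin r) K := fun j i => f j (bA i) with hM
  -- rows of M are linearly independent
  have hrows : LinearIndependent K (fun j => M j) := by
    rw [Fintype.linearIndependent_iff]
    intro g hg
    refine Fintype.linearIndependent_iff.mp hindep g ?_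
    funext a
    have hgi : ∀ i, ∑ j, g j * f j (bA i) = 0 := by
      intro i
      have := congr_fun hg i
      simpa [Finset.sum_apply] using this
    have : (∑ j, g j • (f j : A → K)) a = ∑ j, g j * f j a := by
      simp [Finset.sum_apply]
    rw [this]
    calc ∑ j, g j * f j a
        = ∑ j, ∑ i, algebraMap R K (bA.repr a i) * (g j * f j (bA i)) := by
          refine Finset.sum_congr rfl fun j _ => ?_
          rw [hexp j a, Finset.mul_sum]
          refine Finset.sum_congr rfl fun i _ => ?_
          ring
      _ = ∑ i, algebraMap R K (bA.repr a i) * ∑ j, g j * f j (bA i) := by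
          rw [Finset.sum_comm]
          simp [Finset.mul_sum]
      _ = 0 := by simp [hgi]
  have hunit : IsUnit M := Matrix.linearIndependent_rows_iff_isUnit.mp hrows
  have hMinj : Function.Injective M.mulVec :=
    Matrix.mulVec_injective_iff_isUnit.mpr hunit
  -- now kill J
  rw [eq_bot_iff]
  intro x hx
  have hv : M.mulVec (fun i => algebraMap R K (bA.repr x i)) = 0 := by
    funext j
    have := hvanish j x hx
    rw [hexp j x] at this
    simpa [Matrix.mulVec, dotProduct, mul_comm] using this
  have hv0 : (fun i => algebraMap R K (bA.repr x i)) = 0 := by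
    apply hMinj
    simpa using hv
  have hc : ∀ i, bA.repr x i = 0 := fun i => by
    apply hinj
    have := congr_fun hv0 i
    simpa using this
  have : x = 0 := by
    have := bA.sum_repr x
    simp [hc] at this
    exact this.symm
  simp [this]
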